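/- Let n ≥ 1, let U ⊆ ℝⁿ be a nonempty open connected set, and let h : ℝⁿ → ℝ be continuously differentiable on U. Suppose that for every u ∈ U and all indices α, β ∈ {1,…,n} the partial derivatives satisfy (∂h/∂u_α)(u) · (∂h/∂u_β)(u) = δ_{αβ} · (∂h/∂u_α)(u). Then either h is constant on U, or there exist an index π ∈ {1,…,n} and a constant b ∈ ℝ such that h(u) = u_π + b for all u ∈ U. (This is the classification step in the proof of Theorem 2.10(a): the defining functions of a natural submanifold of a semi-simple F-manifold are, in canonical coordinates, constants or shifted coordinate functions.) -/

import Mathlib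

private lemma clm_apply_eq_sum {n : ℕ} (L : (Fin n → ℝ) →L[ℝ] ℝ) (x : Fin n → ℝ) :
    L x = ∑ α, x α * L (Pi.single α 1) := by
  have hx : x = ∑ α, x α • (Pi.single α 1 : Fin n → ℝ) := by
    funext j
    simp [Pi.single_apply]
  conv_lhs => rw [hx]
  rw [map_sum]
  simp [smul_eq_mul]

private lemma const_of_zero_deriv {E : Type*} [NormedAddCommGroup E] [NormedSpace ℝ E]
    {f : E → ℝ} {U : Set E} (hU : IsOpen U) (hc : IsPreconnected U)
    (hf : ∀ u ∈ U, HasFDerivAt f (0 : E →L[ℝ] ℝ) u) {x y : E} (hx : x ∈ U) (hy : y ∈ U) :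
    f x = f y := by
  have claim : ∀ u ∈ U, ∃ ε > 0, Metric.ball u ε ⊆ U ∧ ∀ v ∈ Metric.ball u ε, f v = f u := by
    intro u hu
    obtain ⟨ε, hε, hball⟩ := Metric.isOpen_iff.1 hU u hu
    refine ⟨ε, hε, hball, fun v hv => ?_⟩
    refine (convex_ball u ε).is_const_of_fderivWithin_eq_zero
      (fun w hw => ((hf w (hball hw)).differentiableAt).differentiableWithinAt)
      (fun w hw => ?_) hv (Metric.mem_ball_self hε)
    rw [fderivWithin_of_isOpen Metric.isOpen_ball hw]
    exact (hf w (hball hw)).fderiv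
  set V : Set E := {u ∈ U | f u = f x} with hV
  set W : Set E := {u ∈ U | f u ≠ f x} with hW
  have hVopen : IsOpen V := by
    rw [Metric.isOpen_iff]
    rintro u ⟨hu, hfu⟩
    obtain ⟨ε, hε, hball, hconst⟩ := claim u hu
    exact ⟨ε, hε, fun v hv => ⟨hball hv, (hconst v hv).trans hfu⟩⟩
  have hWopen : IsOpen W := by
    rw [Metric.isOpen_iff]
    rintro u ⟨hu, hfu⟩
    obtain ⟨ε, hε, hball, hconst⟩ := claim u hu
    exact ⟨ε, hε, fun v hv => ⟨hball hv, (hconst v hv).symm ▸ hfu⟩⟩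
  have hsub : U ⊆ V := by
    refine hc.subset_left_of_subset_union hVopen hWopen ?_ ?_ ⟨x, hx, hx, rfl⟩
    · exact Set.disjoint_left.2 (fun a ha hb => hb.2 ha.2)
    · intro u hu
      by_cases hfu : f u = f x
      · exact Or.inl ⟨hu, hfu⟩
      · exact Or.inr ⟨hu, hfu⟩
  exact ((hsub hy).2).symm

theorem natural_submanifold_defining_functions
    {n : ℕ} (hn : 1 ≤ n)
    (U : Set (Fin n → ℝ)) (hUopen : IsOpen U) (hUconn : IsConnected U) (hUne : U.Nonempty)
    (h : (Fin n → ℝ) → ℝ) (hC1 : ContDiffOn ℝ 1 h U)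
    (hmult : ∀ u ∈ U, ∀ α β : Fin n,
      fderiv ℝ h u (Pi.single α 1) * fderiv ℝ h u (Pi.single β 1)
        = (if α = β then (1 : ℝ) else 0) * fderiv ℝ h u (Pi.single α 1)) :
    (∃ c : ℝ, ∀ u ∈ U, h u = c) ∨
    (∃ (π : Fin n) (b : ℝ), ∀ u ∈ U, h u = u π + b) := by
  classical
  obtain ⟨u₀, hu₀⟩ := hUne
  have hdiffAt : ∀ u ∈ U, DifferentiableAt ℝ h u := fun u hu =>
    ((hC1.differentiableOn one_ne_zero) u hu).differentiableAt (hUopen.mem_nhds hu)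
  have hcont : ContinuousOn (fderiv ℝ h) U :=
    hC1.continuousOn_fderiv_of_isOpen hUopen le_rfl
  have hgcont : ∀ α : Fin n,
      ContinuousOn (fun u => fderiv ℝ h u (Pi.single α 1)) U := fun α =>
    hcont.clm_apply continuousOn_const
  -- each partial derivative value is 0 or 1
  have h01 : ∀ α : Fin n, ∀ u ∈ U,
      fderiv ℝ h u (Pi.single α 1) = 0 ∨ fderiv ℝ h u (Pi.single α 1) = 1 := by
    intro α u hu
    have key := hmult u hu α α
    rw [if_pos rfl, one_mul] at key
    have : fderiv ℝ h u (Pi.single α 1) * (fderiv ℝ h u (Pi.single α 1) - 1) = 0 := by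
      rw [mul_sub, mul_one, key, sub_self]
    rcases mul_eq_zero.1 this with h0 | h1
    · exact Or.inl h0
    · exact Or.inr (by linarith [sub_eq_zero.1 h1])
  -- each partial derivative is constant on U
  have hgconst : ∀ α : Fin n, ∀ u ∈ U,
      fderiv ℝ h u (Pi.single α 1) = fderiv ℝ h u₀ (Pi.single α 1) := by
    intro α u hu
    by_contra hne
    have half : (1/2 : ℝ) ∈ (fun u => fderiv ℝ h u (Pi.single α 1)) '' U := by
      rcases h01 α u hu with h0 | h1 <;> rcases h01 α u₀ hu₀ with h0' | h1'
      · exact absurd (h0.trans h0'.symm) hne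
      · refine hUconn.isPreconnected.intermediate_value hu hu₀ (hgcont α) ?_
        simp only [h0, h1']
        constructor <;> norm_num
      · refine hUconn.isPreconnected.intermediate_value hu₀ hu (hgcont α) ?_
        simp only [h0', h1]
        constructor <;> norm_num
      · exact absurd (h1.trans h1'.symm) hne
    obtain ⟨w, hw, hw2⟩ := half
    rcases h01 α w hw with h0 | h1 <;> simp only at hw2 <;>
      [rw [h0] at hw2; rw [h1] at hw2] <;> norm_num at hw2
  by_cases hex : ∃ π : Fin n, fderiv ℝ h u₀ (Pi.single π 1) = 1
  · -- h u = u π + b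
    obtain ⟨π, hπ⟩ := hex
    right
    have hoth : ∀ α : Fin n, α ≠ π → fderiv ℝ h u₀ (Pi.single α 1) = 0 := by
      intro α hα
      have key := hmult u₀ hu₀ α π
      rw [if_neg hα, zero_mul] at key
      rcases h01 α u₀ hu₀ with h0 | h1
      · exact h0
      · rw [h1, hπ, one_mul] at key; norm_num at key
    have hzero : ∀ u ∈ U,
        HasFDerivAt (fun u => h u - u π) (0 : (Fin n → ℝ) →L[ℝ] ℝ) u := by
      intro u hu
      have h1 : HasFDerivAt h (fderiv ℝ h u) u := (hdiffAt u hu).hasFDerivAt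
      have h2 : HasFDerivAt (fun v : Fin n → ℝ => v π)
          (ContinuousLinearMap.proj π : (Fin n → ℝ) →L[ℝ] ℝ) u :=
        (ContinuousLinearMap.proj π : (Fin n → ℝ) →L[ℝ] ℝ).hasFDerivAt
      have h3 : HasFDerivAt (fun u => h u - u π)
          (fderiv ℝ h u - ContinuousLinearMap.proj π) u := h1.sub h2
      convert h3 using 1
      ext x
      simp only [ContinuousLinearMap.zero_apply, ContinuousLinearMap.sub_apply,
        ContinuousLinearMap.proj_apply]
      rw [clm_apply_eq_sum (fderiv ℝ h u) x]
      have hval : ∀ α : Fin n,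
          fderiv ℝ h u (Pi.single α 1) = if α = π then 1 else 0 := by
        intro α
        by_cases hα : α = π
        · rw [hα, if_pos rfl, hgconst π u hu, hπ]
        · rw [if_neg hα, hgconst α u hu, hoth α hα]
      simp [hval, Finset.sum_ite_eq', mul_ite]
    refine ⟨π, h u₀ - u₀ π, fun u hu => ?_⟩
    have := const_of_zero_deriv hUopen hUconn.isPreconnected hzero hu hu₀
    linarith
  · -- all partials vanish: h constant
    push_neg at hex
    left
    have hall : ∀ α : Fin n, fderiv ℝ h u₀ (Pi.single α 1) = 0 := fun α =>
      (h01 α u₀ hu₀).resolve_right (hex α)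
    have hzero : ∀ u ∈ U, HasFDerivAt h (0 : (Fin n → ℝ) →L[ℝ] ℝ) u := by
      intro u hu
      have h1 : HasFDerivAt h (fderiv ℝ h u) u := (hdiffAt u hu).hasFDerivAt
      convert h1 using 1
      ext x
      rw [ContinuousLinearMap.zero_apply, clm_apply_eq_sum (fderiv ℝ h u) x]
      have hval : ∀ α : Fin n, fderiv ℝ h u (Pi.single α 1) = 0 := fun α =>
        (hgconst α u hu).trans (hall α)
      simp [hval]
    exact ⟨h u₀, fun u hu =>
      const_of_zero_deriv hUopen hUconn.isPreconnected hzero hu hu₀⟩
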